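/- Let Q : (0, ∞) → ℝ be continuous and satisfy (6 − 10^{−20})/t² > 3 Q(t)² for all t > 0. Let λ ∈ [0, 1] and l ≥ 2 be an integer. Then the only solution f : (0, ∞) → ℝ of the equation −(f'' + (2/t) f') + (1 − λ) f + (l(l+1)/t² − 3Q(t)²) f = 0 that lies in L²((0,∞), t² dt) and is bounded near t = 0 is f ≡ 0. -/

import Mathlib

open Set MeasureTheory

/-- Monotonicity helper: a function with nonnegative derivative on `[a,b]` satisfies
`F a ≤ F b`. -/
lemma mono_of_hasDerivAt_nonneg {F F' : ℝ → ℝ} {a b : ℝ}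
    (hF : ∀ t ∈ Icc a b, HasDerivAt F (F' t) t)
    (hF' : ∀ t ∈ Icc a b, 0 ≤ F' t) (hab : a ≤ b) : F a ≤ F b := by
  have hmono : MonotoneOn F (Icc a b) := by
    apply monotoneOn_of_deriv_nonneg (convex_Icc a b)
    · intro t ht
      exact (hF t ht).continuousAt.continuousWithinAt
    · intro t ht
      rw [interior_Icc] at ht
      exact (hF t (Ioo_subset_Icc_self ht)).differentiableAt.differentiableWithinAt
    · intro t ht
      rw [interior_Icc] at ht
      rw [(hF t (Ioo_subset_Icc_self ht)).deriv]
      exact hF' t (Ioo_subset_Icc_self ht)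
  exact hmono (left_mem_Icc.2 hab) (right_mem_Icc.2 hab) hab

/-- For `l ≥ 2` and `λ ∈ [0,1]`, the radial equation with potential
`l(l+1)/t² - 3Q(t)²` admits no nontrivial solution in `L²(t² dt)` bounded near the origin. -/
theorem no_eigenfunction_l_ge_two (Q : ℝ → ℝ) (hQc : ContinuousOn Q (Ioi 0))
    (hQbd : ∀ t > (0:ℝ), 3 * Q t ^ 2 < (6 - 10 ^ (-(20:ℤ))) / t ^ 2)
    (lam : ℝ) (hlam : lam ∈ Icc (0:ℝ) 1) (l : ℕ) (hl : 2 ≤ l)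
    (f : ℝ → ℝ) (hf : ContDiffOn ℝ 2 f (Ioi 0))
    (hode : ∀ t > (0:ℝ),
      -(deriv (deriv f) t + (2 / t) * deriv f t) + (1 - lam) * f t
        + ((l * (l + 1) : ℝ) / t ^ 2 - 3 * Q t ^ 2) * f t = 0)
    (hL2 : IntegrableOn (fun t => f t ^ 2 * t ^ 2) (Ioi 0) volume)
    (hbdd : ∃ C > (0:ℝ), ∃ δ > (0:ℝ), ∀ t ∈ Ioo (0:ℝ) δ, |f t| ≤ C) :
    ∀ t > (0:ℝ), f t = 0 := by
  obtain ⟨hlam0, hlam1⟩ := hlam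
  -- derivatives of `f`
  have hfd : ∀ t ∈ Ioi (0:ℝ), HasDerivAt f (deriv f t) t := by
    intro t ht
    exact ((hf.differentiableOn (by norm_num)).differentiableAt
      (isOpen_Ioi.mem_nhds ht)).hasDerivAt
  have hf1 : ContDiffOn ℝ 1 (deriv f) (Ioi 0) := by
    have h := hf.derivWithin (m := 1) isOpen_Ioi.uniqueDiffOn (by norm_num)
    exact h.congr fun x hx => (derivWithin_of_isOpen isOpen_Ioi hx).symm
  have hfd2 : ∀ t ∈ Ioi (0:ℝ), HasDerivAt (deriv f) (deriv (deriv f) t) t := by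
    intro t ht
    exact ((hf1.differentiableOn one_ne_zero).differentiableAt
      (isOpen_Ioi.mem_nhds ht)).hasDerivAt
  -- the potential
  set V : ℝ → ℝ := fun t => (1 - lam) + ((l : ℝ) * ((l:ℝ) + 1)) / t ^ 2 - 3 * Q t ^ 2
    with hVdef
  have hVnonneg : ∀ t ∈ Ioi (0:ℝ), 0 ≤ V t := by
    intro t ht
    have ht0 : (0:ℝ) < t := ht
    have hQ := hQbd t ht0
    have hl' : (6:ℝ) ≤ (l : ℝ) * ((l:ℝ) + 1) := by
      have h2 : (2:ℝ) ≤ (l:ℝ) := by exact_mod_cast hl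
      nlinarith
    have heps : (0:ℝ) < (10:ℝ) ^ (-(20:ℤ)) := by positivity
    have ht2 : (0:ℝ) < t ^ 2 := by positivity
    have h1 : (6 - (10:ℝ) ^ (-(20:ℤ))) / t ^ 2 ≤ ((l:ℝ) * ((l:ℝ) + 1)) / t ^ 2 := by
      gcongr
      linarith
    simp only [hVdef]
    linarith
  -- key ODE identity for `u = t * f`
  have hkey : ∀ t ∈ Ioi (0:ℝ),
      2 * deriv f t + t * deriv (deriv f) t = t * (V t * f t) := by
    intro t ht
    have ht0 : (0:ℝ) < t := ht
    have ht' : t ≠ 0 := ne_of_gt ht0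
    have h2 : deriv (deriv f) t + 2 / t * deriv f t = V t * f t := by
      have h := hode t ht0
      simp only [hVdef]
      push_cast at h ⊢
      nlinarith [h]
    have h3 : t * (deriv (deriv f) t + 2 / t * deriv f t) = t * (V t * f t) := by
      rw [h2]
    have h4 : t * (2 / t * deriv f t) = 2 * deriv f t := by
      field_simp
    rw [mul_add, h4] at h3
    linarith
  -- derivative of `w = u * u'` where `u = t * f t`
  have hwD : ∀ t ∈ Ioi (0:ℝ),
      HasDerivAt (fun x => (x * f x) * (f x + x * deriv f x))
        ((f t + t * deriv f t) ^ 2 + V t * (t * f t) ^ 2) t := by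
    intro t ht
    have hu : HasDerivAt (fun x => x * f x) (1 * f t + t * deriv f t) t :=
      (hasDerivAt_id t).mul (hfd t ht)
    have hv : HasDerivAt (fun x => f x + x * deriv f x)
        (deriv f t + (1 * deriv f t + t * deriv (deriv f) t)) t :=
      (hfd t ht).add ((hasDerivAt_id t).mul (hfd2 t ht))
    have h := hu.mul hv
    refine h.congr_deriv ?_
    have hk := hkey t ht
    linear_combination (t * f t) * hk
  -- derivative of `g = (t f)^2`
  have hgD : ∀ t ∈ Ioi (0:ℝ),
      HasDerivAt (fun x => (x * f x) ^ 2)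
        (2 * ((t * f t) * (f t + t * deriv f t))) t := by
    intro t ht
    have hu : HasDerivAt (fun x => x * f x) (1 * f t + t * deriv f t) t :=
      (hasDerivAt_id t).mul (hfd t ht)
    have h := hu.fun_pow 2
    refine h.congr_deriv ?_
    norm_num
    ring
  have hIccIoi : ∀ {a b : ℝ}, 0 < a → Icc a b ⊆ Ioi (0:ℝ) :=
    fun {a b} ha t ht => lt_of_lt_of_le ha ht.1
  -- derivative of w is nonnegative
  have hw'nonneg : ∀ t ∈ Ioi (0:ℝ),
      0 ≤ (f t + t * deriv f t) ^ 2 + V t * (t * f t) ^ 2 := by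
    intro t ht
    exact add_nonneg (sq_nonneg _) (mul_nonneg (hVnonneg t ht) (sq_nonneg _))
  -- `w ≤ 0` everywhere on the positive axis
  have hwle : ∀ t ∈ Ioi (0:ℝ), (t * f t) * (f t + t * deriv f t) ≤ 0 := by
    intro t₀ ht₀
    by_contra hpos
    push_neg at hpos
    set c : ℝ := (t₀ * f t₀) * (f t₀ + t₀ * deriv f t₀) with hc
    have hc0 : 0 < c := hpos
    -- w is nondecreasing, so w ≥ c on [t₀, ∞)
    have hwmono : ∀ t, t₀ ≤ t → c ≤ (t * f t) * (f t + t * deriv f t) := by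
      intro t hts
      exact mono_of_hasDerivAt_nonneg
        (fun s hs => hwD s (hIccIoi ht₀ hs))
        (fun s hs => hw'nonneg s (hIccIoi ht₀ hs)) hts
    -- `g` grows at least linearly: for t ≥ t₀, g t ≥ g t₀ + 2c(t - t₀)
    have hgrow : ∀ t, t₀ ≤ t → (t₀ * f t₀) ^ 2 + 2 * c * (t - t₀) ≤ (t * f t) ^ 2 := by
      intro t hts
      have h := mono_of_hasDerivAt_nonneg (F := fun x => (x * f x) ^ 2 - 2 * c * x)
        (F' := fun x => 2 * ((x * f x) * (f x + x * deriv f x)) - 2 * c)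
        (a := t₀) (b := t) ?_ ?_ hts
      · nlinarith [h]
      · intro s hs
        have hlin : HasDerivAt (fun x : ℝ => 2 * c * x) (2 * c) s := by
          simpa using (hasDerivAt_id s).const_mul (2 * c)
        exact (hgD s (hIccIoi ht₀ hs)).sub hlin
      · intro s hs
        have := hwmono s hs.1
        linarith
    -- hence `f t ^ 2 * t ^ 2 ≥ 2c` for `t ≥ t₀ + 1`, contradicting integrability
    have hlow : ∀ t ∈ Ioi (t₀ + 1), 2 * c ≤ f t ^ 2 * t ^ 2 := by
      intro t ht
      have ht1 : t₀ ≤ t := by linarith [mem_Ioi.mp ht]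
      have h := hgrow t ht1
      have : (t * f t) ^ 2 = f t ^ 2 * t ^ 2 := by ring
      rw [this] at h
      have : (1:ℝ) ≤ t - t₀ := by linarith [mem_Ioi.mp ht]
      nlinarith [sq_nonneg (t₀ * f t₀)]
    have hint : IntegrableOn (fun _ : ℝ => 2 * c) (Ioi (t₀ + 1)) volume := by
      apply Integrable.mono' (hL2.mono_set (Ioi_subset_Ioi (by linarith [mem_Ioi.mp ht₀] : (0:ℝ) ≤ t₀ + 1)))
        aestronglyMeasurable_const
      rw [ae_restrict_iff' measurableSet_Ioi]
      filter_upwards with t ht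
      rw [Real.norm_eq_abs, abs_of_pos (by linarith : (0:ℝ) < 2 * c)]
      exact hlow t ht
    rw [integrableOn_const_iff] at hint
    rcases hint with h | h
    · simp at h
      linarith
    · rw [Real.volume_Ioi] at h
      exact (lt_irrefl _ h).elim
  -- `g` is nonincreasing: for 0 < s ≤ t, g t ≤ g s
  have hganti : ∀ s t : ℝ, 0 < s → s ≤ t → (t * f t) ^ 2 ≤ (s * f s) ^ 2 := by
    intro s t hs hst
    have h := mono_of_hasDerivAt_nonneg (F := fun x => -(x * f x) ^ 2)
      (F' := fun x => -(2 * ((x * f x) * (f x + x * deriv f x))))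
      (a := s) (b := t) ?_ ?_ hst
    · linarith
    · intro r hr
      exact (hgD r (hIccIoi hs hr)).neg
    · intro r hr
      have := hwle r (hIccIoi hs hr)
      linarith
  -- conclusion: `g ≡ 0` since `g → 0` at the origin
  intro t ht
  obtain ⟨C, hC, δ, hδ, hCbd⟩ := hbdd
  by_contra hne
  have hgt : 0 < (t * f t) ^ 2 := by
    have : t * f t ≠ 0 := mul_ne_zero (ne_of_gt ht) hne
    positivity
  -- pick s small
  set a : ℝ := (t * f t) ^ 2 with ha
  set s : ℝ := min (min (δ / 2) t) (Real.sqrt a / (2 * C)) with hs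
  have hsa : 0 < Real.sqrt a / (2 * C) := by positivity
  have hs0 : 0 < s := lt_min (lt_min (by linarith) ht) hsa
  have hst : s ≤ t := le_trans (min_le_left _ _) (min_le_right _ _)
  have hsδ : s < δ := lt_of_le_of_lt (le_trans (min_le_left _ _) (min_le_left _ _))
    (by linarith)
  have hfs : |f s| ≤ C := hCbd s ⟨hs0, hsδ⟩
  have hgs : (s * f s) ^ 2 ≤ C ^ 2 * s ^ 2 := by
    have h1 : f s ^ 2 ≤ C ^ 2 := by
      have := abs_le_abs_of_nonneg ?_ hfs
      · nlinarith [abs_nonneg (f s), sq_abs (f s)]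
      · exact abs_nonneg _
    nlinarith [sq_nonneg s]
  have hsb : s ≤ Real.sqrt a / (2 * C) := min_le_right _ _
  have hsmall : C ^ 2 * s ^ 2 ≤ a / 4 := by
    have h1 : s ^ 2 ≤ (Real.sqrt a / (2 * C)) ^ 2 := by
      apply sq_le_sq' _ hsb
      linarith
    have h2 : (Real.sqrt a / (2 * C)) ^ 2 = a / (4 * C ^ 2) := by
      rw [div_pow, Real.sq_sqrt (le_of_lt hgt)]
      ring
    rw [h2] at h1
    have hC2 : (0:ℝ) < C ^ 2 := by positivity
    calc C ^ 2 * s ^ 2 ≤ C ^ 2 * (a / (4 * C ^ 2)) := by nlinarith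
      _ = a / 4 := by field_simp
  have := hganti s t hs0 hst
  simp only [← ha] at this
  linarith
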